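/- arXiv:2005.10534 — 2 statements merged into one kernel-verified Lean document; each statement's English description precedes it below -/
import Mathlib

section
/- Suppose that for every pair of equivalent words v ∼ w whose first letters differ and whose parents are not equivalent (v⁻ ≁ w⁻), one has m(v) = m(w̃) for all w̃ ∼ v, and suppose every equivalence of words that agree on an initial segment arises from an equivalence of the suffixes (self-similarity of the relation). Then condition (B2) holds for all words: for every w, either m(w) = m(w̃) for all w̃ ∼ w, or w⁻ ∼ w̃⁻ for all w̃ ∼ w. -/
/-- The multiplicative mass of a word: product of the weights of its letters. -/
def mass {A : Type*} (m : A → ℝ) (w : List A) : ℝ := (w.map m).prod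

/-- Proposition 3.3: if every pair of equivalent words with different first letters and
non-equivalent parents has all equivalent words of equal mass, and the relation is
self-similar (equivalences of words with a common prefix come from the suffixes),
then condition (B2) holds for all words. -/
theorem stmt2 {A : Type*} (m : A → ℝ) (sim : List A → List A → Prop)
    (hrefl : ∀ w, sim w w)
    (hsymm : ∀ v w, sim v w → sim w v)
    (htrans : ∀ u v w, sim u v → sim v w → sim u w)
    (hlen : ∀ v w, sim v w → v.length = w.length)
    (hself : ∀ (u a b : List A), sim (u ++ a) (u ++ b) ↔ sim a b)
    (hmain : ∀ v w, sim v w → v.head? ≠ w.head? → ¬ sim v.dropLast w.dropLast →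
      ∀ wt, sim v wt → mass m v = mass m wt) :
    ∀ w, (∀ wt, sim w wt → mass m w = mass m wt) ∨
         (∀ wt, sim w wt → sim w.dropLast wt.dropLast) := by
  have hmass : ∀ (a : A) (l : List A), mass m (a :: l) = m a * mass m l := by
    intro a l; simp [mass]
  have hcons : ∀ (a : A) (l l' : List A), sim (a :: l) (a :: l') ↔ sim l l' := by
    intro a l l'; exact hself [a] l l'
  suffices H : ∀ n (w : List A), w.length ≤ n →
      ((∀ wt, sim w wt → mass m w = mass m wt) ∨
       (∀ wt, sim w wt → sim w.dropLast wt.dropLast)) from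
    fun w => H w.length w le_rfl
  intro n
  induction n with
  | zero =>
    intro w hw
    have hwnil : w = [] := List.length_eq_zero_iff.mp (Nat.le_zero.mp hw)
    left
    intro wt ht
    have : wt = [] := List.length_eq_zero_iff.mp (by rw [← hlen w wt ht, hwnil]; rfl)
    rw [hwnil, this]
  | succ n ih =>
    intro w hw
    by_cases hpar : ∀ wt, sim w wt → sim w.dropLast wt.dropLast
    · exact Or.inr hpar
    left
    push_neg at hpar
    obtain ⟨wt, hwwt, hnd⟩ := hpar
    by_cases hh : w.head? = wt.head?
    · -- common first letter
      cases w with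
      | nil =>
        exfalso
        have hwt : wt = [] := List.length_eq_zero_iff.mp (by rw [← hlen _ _ hwwt]; rfl)
        subst hwt
        exact hnd (hrefl _)
      | cons a u =>
        cases wt with
        | nil => simp at hh
        | cons b u' =>
          have hab : a = b := by simpa using hh
          subst hab
          have huu' : sim u u' := (hcons a u u').mp hwwt
          cases u with
          | nil =>
            exfalso
            have : u' = [] := List.length_eq_zero_iff.mp
              (by have := hlen _ _ hwwt; simpa using this.symm)
            subst this
            exact hnd (by simpa using hrefl [])
          | cons c u₀ =>
            cases u' with
            | nil =>
              exfalso; have := hlen _ _ hwwt; simp at this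
            | cons c' u₀' =>
              -- parents are not equivalent at the suffix level either
              have hnd' : ¬ sim (c :: u₀).dropLast (c' :: u₀').dropLast := by
                intro hcon
                apply hnd
                have := (hcons a _ _).mpr hcon
                simpa [List.dropLast] using this
              -- induction hypothesis for the suffix
              have hIH := ih (c :: u₀) (by simp at hw ⊢; omega)
              have hmassu : ∀ ut, sim (c :: u₀) ut → mass m (c :: u₀) = mass m ut := by
                rcases hIH with h | h
                · exact h
                · exact absurd (h _ huu') hnd'
              intro v hv
              by_cases hhv : v.head? = (a :: c :: u₀).head?
              · -- v starts with a too
                cases v with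
                | nil => simp at hhv
                | cons d uv =>
                  have had : d = a := by simpa using hhv
                  subst had
                  have : sim (c :: u₀) uv := (hcons d _ _).mp hv
                  rw [hmass d (c :: u₀), hmass d uv, hmassu _ this]
              · by_cases hdv : sim (a :: c :: u₀).dropLast v.dropLast
                · -- use hmain on v and wt
                  have hvwt : sim v (a :: c' :: u₀') := htrans _ _ _ (hsymm _ _ hv) hwwt
                  have hhead : v.head? ≠ (a :: c' :: u₀').head? :=
                    fun hcon => hhv (hcon.trans hh.symm)
                  have hndv : ¬ sim v.dropLast (a :: c' :: u₀').dropLast := by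
                    intro hcon
                    exact hnd (htrans _ _ _ hdv hcon)
                  exact (hmain v _ hvwt hhead hndv _ (hsymm _ _ hv)).symm
                · -- use hmain on w and v
                  have hhead : (a :: c :: u₀).head? ≠ v.head? := fun hcon => hhv hcon.symm
                  exact hmain _ v hv hhead hdv _ hv
    · -- first letters differ: hmain applies directly
      intro v hv
      exact hmain _ _ hwwt hh hnd _ hv
end

section
/- Suppose (m₁,…,m₆) ∈ (0,1)⁶ satisfies m₁m₂ = m₄m₁, m₄m₂ = m₂m₂, m₂m₁ = m₆m₁, m₆m₂ = m₃m₃, m₃m₂ = m₅m₃, m₅m₁ = m₁m₃, m₄m₃ = m₅m₂ = m₆m₃, and m₁ + ⋯ + m₆ = 1. Then m₂ = m₃ = m₄ = m₅ = m₆ = (1 − m₁)/5, and conversely for every choice of m₁ ∈ (0,1) these values give a solution. -/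
/-- Example 5.4: the mass system of the rotated 3-level Sierpinski gasket has exactly
one free parameter: `m₂ = ⋯ = m₆ = (1 - m₁)/5`, and conversely every `m₁ ∈ (0,1)`
yields a solution. -/
theorem stmt12 :
    (∀ m₁ m₂ m₃ m₄ m₅ m₆ : ℝ,
      m₁ ∈ Set.Ioo (0:ℝ) 1 → m₂ ∈ Set.Ioo (0:ℝ) 1 → m₃ ∈ Set.Ioo (0:ℝ) 1 →
      m₄ ∈ Set.Ioo (0:ℝ) 1 → m₅ ∈ Set.Ioo (0:ℝ) 1 → m₆ ∈ Set.Ioo (0:ℝ) 1 →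
      m₁ * m₂ = m₄ * m₁ → m₄ * m₂ = m₂ * m₂ → m₂ * m₁ = m₆ * m₁ →
      m₆ * m₂ = m₃ * m₃ → m₃ * m₂ = m₅ * m₃ → m₅ * m₁ = m₁ * m₃ →
      m₄ * m₃ = m₅ * m₂ → m₅ * m₂ = m₆ * m₃ →
      m₁ + m₂ + m₃ + m₄ + m₅ + m₆ = 1 →
      m₂ = (1 - m₁) / 5 ∧ m₃ = (1 - m₁) / 5 ∧ m₄ = (1 - m₁) / 5 ∧
      m₅ = (1 - m₁) / 5 ∧ m₆ = (1 - m₁) / 5) ∧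
    (∀ m₁ ∈ Set.Ioo (0:ℝ) 1, ∀ t : ℝ, t = (1 - m₁) / 5 →
      t ∈ Set.Ioo (0:ℝ) 1 ∧
      m₁ * t = t * m₁ ∧ t * t = t * t ∧ t * m₁ = t * m₁ ∧
      t * t = t * t ∧ t * t = t * t ∧ t * m₁ = m₁ * t ∧
      t * t = t * t ∧ t * t = t * t ∧
      m₁ + t + t + t + t + t = 1) := by
  constructor
  · rintro m₁ m₂ m₃ m₄ m₅ m₆ ⟨h1,_⟩ ⟨h2,_⟩ ⟨h3,_⟩ _ _ _ e1 e2 e3 e4 e5 e6 e7 e8 hs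
    have hm1 : m₁ ≠ 0 := ne_of_gt h1
    have hm2 : m₂ ≠ 0 := ne_of_gt h2
    have hm3 : m₃ ≠ 0 := ne_of_gt h3
    have h42 : m₄ = m₂ := by
      have := mul_right_cancel₀ hm1 (e1.symm.trans (mul_comm _ _))
      linarith
    have h62 : m₆ = m₂ := (mul_right_cancel₀ hm1 e3).symm
    have h32 : m₃ = m₂ := by
      have h : m₂ * m₂ = m₃ * m₃ := by rw [← h62] at e4 ⊢; exact e4
      -- note
      nlinarith
    have h52 : m₅ = m₂ := by
      have := e5; rw [h32] at this; exact mul_right_cancel₀ hm2 this.symm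
    refine ⟨by linarith, by linarith, by linarith, by linarith, by linarith⟩
  · rintro m₁ ⟨h1,h2⟩ t ht
    subst ht
    refine ⟨⟨by linarith, by linarith⟩, mul_comm _ _, rfl, rfl, rfl, rfl, mul_comm _ _, rfl, rfl, by ring⟩
end
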